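/- arXiv:2205.06979 — 2 statements merged into one kernel-verified Lean document; each statement's English description precedes it below -/
import Mathlib

section
/- Let F : ℝⁿ → ℝⁿ be continuous, monotone, and L_F-Lipschitz with nonempty zero set, and let g be differentiable, μ_g-strongly convex, with L₁-Lipschitz gradient. Let x* be the unique minimizer of g over {x : F(x) = 0}, and for each k let x*_{η_k} be the unique zero of F + η_k ∇g, where η_k > 0, η_k → 0. Then x*_{η_k} → x* as k → ∞. -/
open Filter

lemma first_order_strong {E : Type*} [NormedAddCommGroup E] [InnerProductSpace ℝ E] [CompleteSpace E]
    {g : E → ℝ} {gradg : E → E}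
    (hg : ∀ x, HasGradientAt g (gradg x) x) {μ : ℝ}
    (hconv : StrongConvexOn Set.univ μ g) (x y : E) :
    g x + (inner ℝ (gradg x) (y - x) : ℝ) + μ / 2 * ‖y - x‖ ^ 2 ≤ g y := by
  set v := y - x with hv
  set c : ℝ := μ / 2 * ‖y - x‖ ^ 2 with hc
  have hline : HasDerivAt (fun t : ℝ => x + t • v) v 0 := by
    simpa using ((hasDerivAt_id (0:ℝ)).smul_const v).const_add x
  have hD : HasDerivAt (fun t : ℝ => g (x + t • v)) (inner ℝ (gradg x) v : ℝ) (0 : ℝ) := by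
    have h1 : HasFDerivAt g (InnerProductSpace.toDual ℝ E (gradg x)) (x + (0:ℝ) • v) := by
      simpa using (hasGradientAt_iff_hasFDerivAt.mp (hg x))
    have h2 := h1.comp_hasDerivAt 0 hline
    simp at h2
    exact h2
  have hslope : Tendsto (slope (fun t : ℝ => g (x + t • v)) 0) (nhdsWithin 0 (Set.Ioi 0))
      (nhds (inner ℝ (gradg x) v : ℝ)) :=
    (hasDerivAt_iff_tendsto_slope.mp hD).mono_left
      (nhdsWithin_mono _ (fun t ht => ne_of_gt ht))
  have hrhs : Tendsto (fun t : ℝ => g y - g x - (1 - t) * c) (nhdsWithin 0 (Set.Ioi 0))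
      (nhds (g y - g x - c)) := by
    have : Tendsto (fun t : ℝ => g y - g x - (1 - t) * c) (nhds 0) (nhds (g y - g x - (1-0) * c)) := by
      apply Continuous.tendsto
      continuity
    simpa using this.mono_left nhdsWithin_le_nhds
  have hineq : ∀ᶠ t in nhdsWithin (0:ℝ) (Set.Ioi 0),
      slope (fun t : ℝ => g (x + t • v)) 0 t ≤ g y - g x - (1 - t) * c := by
    filter_upwards [Ioo_mem_nhdsGT_of_mem (by norm_num : (0:ℝ) ∈ Set.Ico 0 1)]
    rintro t ⟨ht0, ht1⟩
    have hconv2 := hconv.2 (Set.mem_univ y) (Set.mem_univ x) ht0.le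
      (by linarith : (0:ℝ) ≤ 1 - t) (by ring)
    have hpt : t • y + (1 - t) • x = x + t • v := by
      rw [hv]; rw [sub_smul, one_smul, smul_sub]; abel
    rw [hpt, smul_eq_mul, smul_eq_mul] at hconv2
    have hconv2' : g (x + t • v) ≤ t * g y + (1 - t) * g x - t * (1 - t) * c := by
      simpa [hc] using hconv2
    rw [slope_def_field, sub_zero, div_le_iff₀ ht0]
    calc g (x + t • v) - g (x + (0:ℝ) • v)
        = g (x + t • v) - g x := by norm_num
      _ ≤ t * g y + (1 - t) * g x - t * (1 - t) * c - g x := by linarith [hconv2']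
      _ = (g y - g x - (1 - t) * c) * t := by ring
  have := le_of_tendsto_of_tendsto hslope hrhs hineq
  linarith

theorem tikhonov_trajectory_converges
    (n : ℕ) (F : EuclideanSpace ℝ (Fin n) → EuclideanSpace ℝ (Fin n))
    (hFcont : Continuous F)
    (hFmono : ∀ x y, (0 : ℝ) ≤ inner ℝ (F x - F y) (x - y))
    (LF : NNReal) (hFlip : LipschitzWith LF F)
    (g : EuclideanSpace ℝ (Fin n) → ℝ)
    (gradg : EuclideanSpace ℝ (Fin n) → EuclideanSpace ℝ (Fin n))
    (hg : ∀ x, HasGradientAt g (gradg x) x)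
    (μg : ℝ) (hμg : 0 < μg)
    (hgconv : StrongConvexOn Set.univ μg g)
    (L₁ : NNReal) (hglip : LipschitzWith L₁ gradg)
    (xs : EuclideanSpace ℝ (Fin n))
    (hxs : F xs = 0) (hxsmin : ∀ x, F x = 0 → g xs ≤ g x)
    (η : ℕ → ℝ) (hηpos : ∀ k, 0 < η k) (hηlim : Tendsto η atTop (nhds 0))
    (xη : ℕ → EuclideanSpace ℝ (Fin n))
    (hxη : ∀ k, F (xη k) + η k • gradg (xη k) = 0)
    (hxηuniq : ∀ k y, F y + η k • gradg y = 0 → y = xη k) :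
    Tendsto xη atTop (nhds xs) := by
  have hFO := fun a b => first_order_strong hg hgconv a b
  set c : ℝ := ‖gradg xs‖ with hcdef
  have hFeq : ∀ k, F (xη k) = -(η k • gradg (xη k)) :=
    fun k => eq_neg_of_add_eq_zero_left (hxη k)
  -- key 1 : gradient term nonneg
  have hkey1 : ∀ k, (0:ℝ) ≤ inner ℝ (gradg (xη k)) (xs - xη k) := by
    intro k
    have h := hFmono (xη k) xs
    rw [hxs, sub_zero, hFeq k] at h
    have h2 : (inner ℝ (-(η k • gradg (xη k))) (xη k - xs) : ℝ)
        = η k * inner ℝ (gradg (xη k)) (xs - xη k) := by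
      rw [show xs - xη k = -(xη k - xs) from (neg_sub _ _).symm, inner_neg_left,
        inner_neg_right, real_inner_smul_left]
      ring
    rw [h2] at h
    by_contra hneg
    push_neg at hneg
    nlinarith [mul_pos (hηpos k) (neg_pos.mpr hneg)]
  -- key 2 : g (xη k) + μ/2 dist² ≤ g xs
  have hkey2 : ∀ k, g (xη k) + μg / 2 * ‖xs - xη k‖ ^ 2 ≤ g xs := by
    intro k
    have := hFO (xη k) xs
    linarith [hkey1 k]
  -- boundedness
  set R : ℝ := c / μg with hRdef
  have hbound : ∀ k, ‖xη k - xs‖ ≤ R := by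
    intro k
    have h2 := hFO xs (xη k)
    have h3 := hkey2 k
    rw [norm_sub_rev (xs) (xη k)] at h3
    have hcs : -(inner ℝ (gradg xs) (xη k - xs) : ℝ) ≤ c * ‖xη k - xs‖ := by
      have h4 := abs_real_inner_le_norm (gradg xs) (xη k - xs)
      have h5 := neg_abs_le (inner ℝ (gradg xs) (xη k - xs) : ℝ)
      linarith
    rcases eq_or_lt_of_le (norm_nonneg (xη k - xs)) with h0 | h0
    · rw [← h0, hRdef]
      positivity
    · rw [hRdef, le_div_iff₀ hμg]
      nlinarith
  have hgradbound : ∀ k, ‖gradg (xη k)‖ ≤ c + (L₁ : ℝ) * R := by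
    intro k
    have h1 : ‖gradg (xη k)‖ ≤ ‖gradg xs‖ + ‖gradg (xη k) - gradg xs‖ := by
      have := norm_add_le (gradg xs) (gradg (xη k) - gradg xs)
      simpa using this
    have h2 : ‖gradg (xη k) - gradg xs‖ ≤ (L₁ : ℝ) * ‖xη k - xs‖ := by
      have := hglip.dist_le_mul (xη k) xs
      simpa [dist_eq_norm] using this
    have h3 : (L₁ : ℝ) * ‖xη k - xs‖ ≤ (L₁ : ℝ) * R :=
      mul_le_mul_of_nonneg_left (hbound k) (L₁.coe_nonneg)
    linarith
  -- F (xη k) → 0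
  have hC : (0:ℝ) ≤ c + (L₁ : ℝ) * R := le_trans (norm_nonneg _) (hgradbound 0)
  have hFlim : Tendsto (fun k => F (xη k)) atTop (nhds 0) := by
    rw [tendsto_zero_iff_norm_tendsto_zero]
    apply squeeze_zero (fun k => norm_nonneg _)
      (g := fun k => η k * (c + (L₁ : ℝ) * R))
    · intro k
      calc ‖F (xη k)‖ = |η k| * ‖gradg (xη k)‖ := by
            rw [hFeq k, norm_neg, norm_smul, Real.norm_eq_abs]
        _ = η k * ‖gradg (xη k)‖ := by rw [abs_of_pos (hηpos k)]
        _ ≤ η k * (c + (L₁ : ℝ) * R) :=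
            mul_le_mul_of_nonneg_left (hgradbound k) (hηpos k).le
    · simpa using hηlim.mul_const (c + (L₁ : ℝ) * R)
  have hgcont : Continuous g := continuous_iff_continuousAt.mpr fun x =>
    (hasGradientAt_iff_hasFDerivAt.mp (hg x)).differentiableAt.continuousAt
  -- subsequence argument
  apply tendsto_of_subseq_tendsto
  intro ns hns
  have hball : ∀ k, xη k ∈ Metric.closedBall xs R := by
    intro k
    rw [Metric.mem_closedBall, dist_eq_norm]
    exact hbound k
  obtain ⟨a, _, φ, hφmono, hφtend⟩ :=
    tendsto_subseq_of_bounded (Metric.isBounded_closedBall (x := xs) (r := R))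
      (fun i => hball (ns i))
  have hnsφ : Tendsto (fun i => ns (φ i)) atTop atTop := hns.comp hφmono.tendsto_atTop
  have hφtend' : Tendsto (fun i => xη (ns (φ i))) atTop (nhds a) := hφtend
  have hFa : F a = 0 := by
    have h1 : Tendsto (fun i => F (xη (ns (φ i)))) atTop (nhds (F a)) :=
      (hFcont.tendsto a).comp hφtend'
    have h2 : Tendsto (fun i => F (xη (ns (φ i)))) atTop (nhds 0) :=
      hFlim.comp hnsφ
    exact tendsto_nhds_unique h1 h2
  have hcontfun : Continuous (fun z : EuclideanSpace ℝ (Fin n) =>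
      g z + μg / 2 * ‖xs - z‖ ^ 2) := by
    apply hgcont.add
    exact continuous_const.mul (((continuous_const.sub continuous_id).norm).pow 2)
  have hGa : Tendsto (fun i => g (xη (ns (φ i))) + μg / 2 * ‖xs - xη (ns (φ i))‖ ^ 2)
      atTop (nhds (g a + μg / 2 * ‖xs - a‖ ^ 2)) :=
    (hcontfun.tendsto a).comp hφtend'
  have hle : g a + μg / 2 * ‖xs - a‖ ^ 2 ≤ g xs :=
    le_of_tendsto' hGa (fun i => hkey2 (ns (φ i)))
  have hge : g xs ≤ g a := hxsmin a hFa
  have hnorm0 : ‖xs - a‖ = 0 := by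
    have h1 : ‖xs - a‖ ^ 2 ≤ 0 := by nlinarith
    nlinarith [norm_nonneg (xs - a), sq_nonneg ‖xs - a‖]
  have hax : a = xs := by
    have := sub_eq_zero.mp (norm_eq_zero.mp hnorm0)
    exact this.symm
  exact ⟨φ, hax ▸ hφtend'⟩
end

section
/- Let T_η = F + η∇g where F is monotone and ∇g is μ_g-strongly monotone and L₁-Lipschitz, and let x*_η denote the unique zero of T_η. Suppose additionally ‖∇g(x*_η)‖ ≤ C for all η in an interval. Then for η, η' > 0 in that interval, ‖x*_η − x*_{η'}‖ ≤ (C/μ_g)·|1 − η'/η|. -/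
theorem tikhonov_trajectory_increment_bound
    (n : ℕ) (F gradg : EuclideanSpace ℝ (Fin n) → EuclideanSpace ℝ (Fin n))
    (μg L₁ C : ℝ) (hμg : 0 < μg)
    (hFmono : ∀ x y, (0 : ℝ) ≤ inner ℝ (F x - F y) (x - y))
    (hgmono : ∀ x y, μg * ‖x - y‖ ^ 2 ≤ inner ℝ (gradg x - gradg y) (x - y))
    (hglip : ∀ x y, ‖gradg x - gradg y‖ ≤ L₁ * ‖x - y‖)
    (s : Set ℝ) (hs : ∀ η ∈ s, 0 < η)
    (x : ℝ → EuclideanSpace ℝ (Fin n))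
    (hx : ∀ η ∈ s, F (x η) + η • gradg (x η) = 0)
    (hC : ∀ η ∈ s, ‖gradg (x η)‖ ≤ C) :
    ∀ η ∈ s, ∀ η' ∈ s, ‖x η - x η'‖ ≤ (C / μg) * |1 - η' / η| := by
  intro η hη η' hη'
  have hη0 := hs η hη
  have hη'0 := hs η' hη'
  have hC0 : 0 ≤ C := le_trans (norm_nonneg _) (hC η hη)
  set d := x η - x η' with hd
  have hFη : F (x η) = -(η • gradg (x η)) := eq_neg_of_add_eq_zero_left (hx η hη)
  have hFη' : F (x η') = -(η' • gradg (x η')) := eq_neg_of_add_eq_zero_left (hx η' hη')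
  have h1 : (0:ℝ) ≤ inner ℝ (F (x η) - F (x η')) d := hFmono _ _
  rw [hFη, hFη'] at h1
  have h1' : (0:ℝ) ≤ -(η * inner ℝ (gradg (x η)) d) + η' * inner ℝ (gradg (x η')) d := by
    have : inner ℝ (-(η • gradg (x η)) - -(η' • gradg (x η'))) d
        = -(η * inner ℝ (gradg (x η)) d) + η' * (inner ℝ (gradg (x η')) d : ℝ) := by
      rw [inner_sub_left, inner_neg_left, inner_neg_left, real_inner_smul_left,
        real_inner_smul_left]
      ring
    linarith [this ▸ h1]
  have h2 : η * (inner ℝ (gradg (x η)) d - inner ℝ (gradg (x η')) d)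
      ≤ (η' - η) * inner ℝ (gradg (x η')) d := by ring_nf; nlinarith [h1']
  have h3 : η * (μg * ‖d‖ ^ 2) ≤ (η' - η) * inner ℝ (gradg (x η')) d := by
    refine le_trans ?_ h2
    have := hgmono (x η) (x η')
    rw [← inner_sub_left] at h2 ⊢
    exact mul_le_mul_of_nonneg_left this hη0.le
  have h4 : (η' - η) * inner ℝ (gradg (x η')) d ≤ |η' - η| * (C * ‖d‖) := by
    calc (η' - η) * inner ℝ (gradg (x η')) d
        ≤ |(η' - η) * inner ℝ (gradg (x η')) d| := le_abs_self _
      _ = |η' - η| * |(inner ℝ (gradg (x η')) d : ℝ)| := abs_mul _ _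
      _ ≤ |η' - η| * (‖gradg (x η')‖ * ‖d‖) := by
          exact mul_le_mul_of_nonneg_left (abs_real_inner_le_norm _ _) (abs_nonneg _)
      _ ≤ |η' - η| * (C * ‖d‖) := by
          exact mul_le_mul_of_nonneg_left
            (mul_le_mul_of_nonneg_right (hC η' hη') (norm_nonneg _)) (abs_nonneg _)
  have key : η * μg * ‖d‖ ^ 2 ≤ |η' - η| * (C * ‖d‖) := by nlinarith [h3, h4]
  have habs : |1 - η' / η| = |η - η'| / η := by
    rw [show (1 : ℝ) - η' / η = (η - η') / η by field_simp, abs_div, abs_of_pos hη0]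
  rw [habs, abs_sub_comm]
  rw [div_mul_div_comm]
  rw [le_div_iff₀ (by positivity)]
  rcases eq_or_lt_of_le (norm_nonneg d) with h0 | h0
  · rw [← h0, zero_mul]; positivity
  · nlinarith [key]
end
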